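/- arXiv:2409.09437 — 3 statements merged into one kernel-verified Lean document; each statement's English description precedes it below -/
import Mathlib

section
/- Let μ : ℝⁿ → [0,∞) be locally integrable, r > 0, Y = (y,s) ∈ ℝ^{n+1}, and θ ∈ (0,1). Then for every X₀ = (x₀,t₀) in the weighted cylinder C_{(1−θ)r,μ}(Y), the cylinder C_{θr,μ}(X₀) is contained in C_{r,μ}(Y). -/
open MeasureTheory Metric Set Filter

noncomputable section

abbrev En (n : ℕ) := EuclideanSpace ℝ (Fin n)

/-- Lebesgue average of `f` over the ball `B_ρ(x₀)`. -/
def avgB {n : ℕ} (f : En n → ℝ) (x₀ : En n) (ρ : ℝ) : ℝ :=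
  (∫ x in ball x₀ ρ, f x) / (volume (ball x₀ ρ)).toReal

/-- The weighted parabolic cylinder $C_{r,μ}(y,s) = B_r(y) × (s - r²(μ)_{B_r(y)}^{1/n}, s)$. -/
def cylinder {n : ℕ} (μ : En n → ℝ) (y : En n) (s r : ℝ) : Set (En n × ℝ) :=
  (ball y r) ×ˢ (Ioo (s - r ^ 2 * (avgB μ y r) ^ ((1 : ℝ) / n)) s)

lemma volume_unitball_pos {n : ℕ} :
    0 < ((volume (ball (0 : En n) 1)).toReal) := by
  have h1 : 0 < volume (ball (0 : En n) 1) := measure_ball_pos _ _ one_pos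
  have h2 : volume (ball (0 : En n) 1) < ⊤ := measure_ball_lt_top
  exact ENNReal.toReal_pos h1.ne' h2.ne

lemma avg_rw {n : ℕ} (hn : 1 ≤ n) (μ : En n → ℝ) (hμ : ∀ x, 0 ≤ μ x)
    (x : En n) (ρ : ℝ) (hρ : 0 < ρ) :
    ρ ^ 2 * (avgB μ x ρ) ^ ((1 : ℝ) / n) =
      ρ * ((∫ z in ball x ρ, μ z) ^ ((1 : ℝ) / n)
        / ((volume (ball (0 : En n) 1)).toReal) ^ ((1 : ℝ) / n)) := by
  have hnn : (n : ℝ) ≠ 0 := Nat.cast_ne_zero.mpr (by omega)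
  have hI : 0 ≤ ∫ z in ball x ρ, μ z :=
    setIntegral_nonneg measurableSet_ball fun z _ => hμ z
  have hV : 0 < ((volume (ball (0 : En n) 1)).toReal) := volume_unitball_pos
  haveI : Nonempty (Fin n) := ⟨⟨0, by omega⟩⟩
  haveI : Nontrivial (En n) := inferInstance
  have hvol : (volume (ball x ρ)).toReal
      = ρ ^ n * ((volume (ball (0 : En n) 1)).toReal) := by
    rw [Measure.addHaar_ball volume x hρ.le, ENNReal.toReal_mul,
      ENNReal.toReal_ofReal (by positivity), finrank_euclideanSpace, Fintype.card_fin]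
  have hρn : (0:ℝ) < ρ ^ n := by positivity
  rw [avgB, hvol, Real.div_rpow hI (by positivity), Real.mul_rpow hρn.le hV.le]
  have hpow : (ρ ^ n : ℝ) ^ ((1 : ℝ) / n) = ρ := by
    rw [← Real.rpow_natCast ρ n, ← Real.rpow_mul hρ.le]
    rw [mul_one_div, div_self hnn, Real.rpow_one]
  rw [hpow]
  have hVp : (0:ℝ) < ((volume (ball (0 : En n) 1)).toReal) ^ ((1 : ℝ) / n) :=
    Real.rpow_pos_of_pos hV _
  field_simp

lemma key {n : ℕ} (hn : 1 ≤ n) (μ : En n → ℝ) (hμ : ∀ x, 0 ≤ μ x)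
    (hμloc : LocallyIntegrable μ) (y x₀ : En n) (r : ℝ) (hr : 0 < r)
    (θ : ℝ) (hθ : θ ∈ Ioo (0 : ℝ) 1) (hx₀ : dist x₀ y < (1 - θ) * r) :
    ((1 - θ) * r) ^ 2 * (avgB μ y ((1 - θ) * r)) ^ ((1 : ℝ) / n)
      + (θ * r) ^ 2 * (avgB μ x₀ (θ * r)) ^ ((1 : ℝ) / n)
      ≤ r ^ 2 * (avgB μ y r) ^ ((1 : ℝ) / n) := by
  obtain ⟨hθ0, hθ1⟩ := hθ
  have h1θ : 0 < 1 - θ := by linarith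
  have hr1 : 0 < (1 - θ) * r := by positivity
  have hr2 : 0 < θ * r := by positivity
  have hint : IntegrableOn μ (ball y r) :=
    (hμloc.integrableOn_isCompact (isCompact_closedBall y r)).mono_set
      ball_subset_closedBall
  have hsub1 : ball y ((1 - θ) * r) ⊆ ball y r :=
    ball_subset_ball (by nlinarith)
  have hsub2 : ball x₀ (θ * r) ⊆ ball y r :=
    ball_subset_ball' (by linarith)
  have hnonneg : 0 ≤ᵐ[volume.restrict (ball y r)] μ :=
    Filter.Eventually.of_forall fun z => hμ z
  have hI1 : (∫ z in ball y ((1 - θ) * r), μ z) ≤ ∫ z in ball y r, μ z :=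
    setIntegral_mono_set hint hnonneg (HasSubset.Subset.eventuallyLE hsub1)
  have hI2 : (∫ z in ball x₀ (θ * r), μ z) ≤ ∫ z in ball y r, μ z :=
    setIntegral_mono_set hint hnonneg (HasSubset.Subset.eventuallyLE hsub2)
  have hI1nn : 0 ≤ ∫ z in ball y ((1 - θ) * r), μ z :=
    setIntegral_nonneg measurableSet_ball fun z _ => hμ z
  have hI2nn : 0 ≤ ∫ z in ball x₀ (θ * r), μ z :=
    setIntegral_nonneg measurableSet_ball fun z _ => hμ z
  have he : (0:ℝ) ≤ (1:ℝ)/n := by positivity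
  have hIr1 := Real.rpow_le_rpow hI1nn hI1 he
  have hIr2 := Real.rpow_le_rpow hI2nn hI2 he
  rw [avg_rw hn μ hμ y _ hr1, avg_rw hn μ hμ x₀ _ hr2, avg_rw hn μ hμ y r hr]
  have hVp : (0:ℝ) < ((volume (ball (0 : En n) 1)).toReal) ^ ((1 : ℝ) / n) :=
    Real.rpow_pos_of_pos volume_unitball_pos _
  set c := ((volume (ball (0 : En n) 1)).toReal) ^ ((1 : ℝ) / n)
  calc ((1 - θ) * r) * ((∫ z in ball y ((1 - θ) * r), μ z) ^ ((1:ℝ)/n) / c)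
        + (θ * r) * ((∫ z in ball x₀ (θ * r), μ z) ^ ((1:ℝ)/n) / c)
      ≤ ((1 - θ) * r) * ((∫ z in ball y r, μ z) ^ ((1:ℝ)/n) / c)
        + (θ * r) * ((∫ z in ball y r, μ z) ^ ((1:ℝ)/n) / c) := by
        gcongr
    _ = r * ((∫ z in ball y r, μ z) ^ ((1:ℝ)/n) / c) := by ring

/-- cylinder inclusion: if $X₀ ∈ C_{(1-θ)r,μ}(Y)$ then
$C_{θr,μ}(X₀) ⊆ C_{r,μ}(Y)$. -/
theorem stmt6 {n : ℕ} (hn : 1 ≤ n) (μ : En n → ℝ) (hμ : ∀ x, 0 ≤ μ x)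
    (hμloc : LocallyIntegrable μ) (y : En n) (s r : ℝ) (hr : 0 < r)
    (θ : ℝ) (hθ : θ ∈ Ioo (0 : ℝ) 1)
    (X₀ : En n × ℝ) (hX₀ : X₀ ∈ cylinder μ y s ((1 - θ) * r)) :
    cylinder μ X₀.1 X₀.2 (θ * r) ⊆ cylinder μ y s r := by
  obtain ⟨x₀, t₀⟩ := X₀
  obtain ⟨hx₀, ht₀⟩ := hX₀
  simp only [mem_ball, mem_Ioo] at hx₀ ht₀
  rintro ⟨x, t⟩ ⟨hx, ht⟩
  simp only [mem_ball, mem_Ioo] at hx ht ⊢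
  obtain ⟨hθ0, hθ1⟩ := hθ
  constructor
  · -- ball inclusion
    calc dist x y ≤ dist x x₀ + dist x₀ y := dist_triangle _ _ _
      _ < θ * r + (1 - θ) * r := add_lt_add hx hx₀
      _ = r := by ring
  · have hkey := key hn μ hμ hμloc y x₀ r hr θ ⟨hθ0, hθ1⟩ hx₀
    constructor
    · have h1 := ht₀.1
      have h2 := ht.1
      linarith
    · linarith [ht.2, ht₀.2]
end
end

section
/- The function ρ_ω defined in the context satisfies the quasi-triangle inequality: for every X, Y, Z ∈ ℝ^{n+1}, ρ_ω(X,Z) ≤ 2[ρ_ω(X,Y) + ρ_ω(Y,Z)]. -/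
open MeasureTheory Metric Set Filter

noncomputable section

/-- $μ = ω^{-n}$. -/
def mu {n : ℕ} (ω : En n → ℝ) : En n → ℝ := fun x => ω x ^ (-(n : ℝ))

/-- $φ_y(τ) = τ²(μ)_{B_τ(y)}^{1/n}$. -/
def phi {n : ℕ} (ω : En n → ℝ) (y : En n) (τ : ℝ) : ℝ :=
  τ ^ 2 * (avgB (mu ω) y τ) ^ ((1 : ℝ) / n)

/-- $Θ_Y(X) = \max\{|x-y|, φ_y^{-1}(s-t)\}$ (with $ψ$ a given inverse family). -/
def Theta {n : ℕ} (ψ : En n → ℝ → ℝ) (X Y : En n × ℝ) : ℝ :=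
  max (dist X.1 Y.1) (ψ Y.1 (Y.2 - X.2))

/-- $\bar ρ_ω(X,Y)$ for $X.2 ≤ Y.2$. -/
def rhoBar {n : ℕ} (ω : En n → ℝ) (ψ : En n → ℝ → ℝ) (X Y : En n × ℝ) : ℝ :=
  Real.sqrt ((Theta ψ X Y) ^ 2 +
    min (dist X.1 Y.1 ^ 2)
      ((avgB (mu ω) Y.1 (Theta ψ X Y)) ^ (-(1 : ℝ) / n) * (Y.2 - X.2)))

open Classical in
/-- The quasi-distance $ρ_ω$. -/
def rho {n : ℕ} (ω : En n → ℝ) (ψ : En n → ℝ → ℝ) (X Y : En n × ℝ) : ℝ :=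
  if X = Y then 0 else if X.2 ≤ Y.2 then rhoBar ω ψ X Y else rhoBar ω ψ Y X

namespace S10

variable {n : ℕ} {ω : En n → ℝ}

lemma mu_ae_nonneg (hμpos : ∀ᵐ x ∂(volume : Measure (En n)), 0 < mu ω x) :
    0 ≤ᵐ[(volume : Measure (En n))] mu ω := hμpos.mono fun _ hx => hx.le

lemma avgB_nonneg (hμpos : ∀ᵐ x ∂(volume : Measure (En n)), 0 < mu ω x)
    (y : En n) (τ : ℝ) : 0 ≤ avgB (mu ω) y τ :=
  div_nonneg (integral_nonneg_of_ae (ae_restrict_of_ae (mu_ae_nonneg hμpos)))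
    ENNReal.toReal_nonneg

lemma integrableOn_ball (hμloc : LocallyIntegrable (mu ω)) (z : En n) (τ : ℝ) :
    IntegrableOn (mu ω) (ball z τ) :=
  (hμloc.integrableOn_isCompact (isCompact_closedBall z τ)).mono_set ball_subset_closedBall

lemma avgB_pos (hμloc : LocallyIntegrable (mu ω))
    (hμpos : ∀ᵐ x ∂(volume : Measure (En n)), 0 < mu ω x)
    (y : En n) {τ : ℝ} (hτ : 0 < τ) : 0 < avgB (mu ω) y τ := by
  have hvol : 0 < volume (ball y τ) := measure_ball_pos _ _ hτ
  have hI : 0 < ∫ x in ball y τ, mu ω x := by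
    rw [setIntegral_pos_iff_support_of_nonneg_ae (ae_restrict_of_ae (mu_ae_nonneg hμpos))
      (integrableOn_ball hμloc y τ)]
    have hnull : volume (ball y τ \ Function.support (mu ω)) = 0 := by
      apply measure_mono_null (t := {x | ¬ 0 < mu ω x})
      · intro x hx
        simp only [mem_diff, Function.mem_support, not_not] at hx
        simp [hx.2]
      · exact hμpos
    have : volume (ball y τ) ≤ volume (Function.support (mu ω) ∩ ball y τ)
        + volume (ball y τ \ Function.support (mu ω)) := by
      refine le_trans (measure_mono ?_) (measure_union_le _ _)
      intro x hx
      by_cases hs : x ∈ Function.support (mu ω)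
      · exact Or.inl ⟨hs, hx⟩
      · exact Or.inr ⟨hx, hs⟩
    rw [hnull, add_zero] at this
    exact lt_of_lt_of_le hvol this
  exact div_pos hI (ENNReal.toReal_pos hvol.ne' measure_ball_lt_top.ne)

lemma vol_ball (hn : 1 ≤ n) (y : En n) {τ : ℝ} (hτ : 0 ≤ τ) :
    (volume (ball y τ)).toReal = τ ^ n * (volume (ball (0 : En n) 1)).toReal := by
  haveI : Nontrivial (En n) := Module.nontrivial_of_finrank_pos (R := ℝ)
    (by rw [finrank_euclideanSpace_fin]; omega)
  rw [Measure.addHaar_ball volume y hτ, ENNReal.toReal_mul,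
    ENNReal.toReal_ofReal (by positivity), finrank_euclideanSpace_fin]

lemma rpow_helper (hn : 1 ≤ n) {a σ : ℝ} (ha : 0 ≤ a) (hσ : 0 ≤ σ) :
    (a * σ ^ n) ^ ((1 : ℝ) / n) = σ * a ^ ((1 : ℝ) / n) := by
  have hn0 : (n : ℝ) ≠ 0 := Nat.cast_ne_zero.mpr (by omega)
  rw [Real.mul_rpow ha (pow_nonneg hσ n), ← Real.rpow_natCast σ n, ← Real.rpow_mul hσ,
    mul_one_div, div_self hn0, Real.rpow_one, mul_comm]

/-- The fundamental monotonicity: if `ball y σ ⊆ ball z τ` then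
`σ (μ)_{B_σ(y)}^{1/n} ≤ τ (μ)_{B_τ(z)}^{1/n}`. -/
lemma F_mono (hn : 1 ≤ n) (hμloc : LocallyIntegrable (mu ω))
    (hμpos : ∀ᵐ x ∂(volume : Measure (En n)), 0 < mu ω x)
    {y z : En n} {σ τ : ℝ} (hσ : 0 ≤ σ) (hτ : 0 ≤ τ) (hsub : ball y σ ⊆ ball z τ) :
    σ * (avgB (mu ω) y σ) ^ ((1 : ℝ) / n) ≤ τ * (avgB (mu ω) z τ) ^ ((1 : ℝ) / n) := by
  rcases eq_or_lt_of_le hσ with h | h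
  · rw [← h, zero_mul]
    exact mul_nonneg hτ (Real.rpow_nonneg (avgB_nonneg hμpos _ _) _)
  · have hτpos : 0 < τ := lt_of_le_of_lt dist_nonneg (mem_ball.mp (hsub (mem_ball_self h)))
    have hI : ∫ x in ball y σ, mu ω x ≤ ∫ x in ball z τ, mu ω x :=
      setIntegral_mono_set (integrableOn_ball hμloc z τ)
        (ae_restrict_of_ae (mu_ae_nonneg hμpos)) (HasSubset.Subset.eventuallyLE hsub)
    set c := (volume (ball (0 : En n) 1)).toReal with hc
    have hcpos : 0 < c := ENNReal.toReal_pos (measure_ball_pos _ _ one_pos).ne'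
      measure_ball_lt_top.ne
    have hv1 : (volume (ball y σ)).toReal = σ ^ n * c := vol_ball hn y h.le
    have hv2 : (volume (ball z τ)).toReal = τ ^ n * c := vol_ball hn z hτpos.le
    have e1 : (∫ x in ball y σ, mu ω x) = avgB (mu ω) y σ * σ ^ n * c := by
      rw [avgB, hv1]; field_simp
    have e2 : (∫ x in ball z τ, mu ω x) = avgB (mu ω) z τ * τ ^ n * c := by
      rw [avgB, hv2]; field_simp
    rw [e1, e2] at hI
    have key : avgB (mu ω) y σ * σ ^ n ≤ avgB (mu ω) z τ * τ ^ n :=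
      le_of_mul_le_mul_right hI hcpos
    have h1 : (avgB (mu ω) y σ * σ ^ n) ^ ((1 : ℝ) / n)
        ≤ (avgB (mu ω) z τ * τ ^ n) ^ ((1 : ℝ) / n) :=
      Real.rpow_le_rpow (mul_nonneg (avgB_nonneg hμpos _ _) (pow_nonneg h.le n)) key
        (by positivity)
    rwa [rpow_helper hn (avgB_nonneg hμpos _ _) h.le,
      rpow_helper hn (avgB_nonneg hμpos _ _) hτpos.le] at h1

end S10

namespace S10

variable {n : ℕ} {ω : En n → ℝ} {ψ : En n → ℝ → ℝ}

lemma phi_zero (y : En n) : phi ω y 0 = 0 := by simp [phi]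

lemma phi_eq (y : En n) (τ : ℝ) :
    phi ω y τ = τ * (τ * (avgB (mu ω) y τ) ^ ((1 : ℝ) / n)) := by rw [phi]; ring

/-- cross-center monotonicity of φ. -/
lemma phi_le (hn : 1 ≤ n) (hμloc : LocallyIntegrable (mu ω))
    (hμpos : ∀ᵐ x ∂(volume : Measure (En n)), 0 < mu ω x)
    {y z : En n} {σ τ : ℝ} (hσ : 0 ≤ σ) (hτ : 0 ≤ τ) (hστ : σ ≤ τ)
    (hsub : ball y σ ⊆ ball z τ) : phi ω y σ ≤ phi ω z τ := by
  rw [phi_eq, phi_eq]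
  have h1 := F_mono hn hμloc hμpos hσ hτ hsub
  have h2 : 0 ≤ τ * (avgB (mu ω) z τ) ^ ((1 : ℝ) / n) :=
    mul_nonneg hτ (Real.rpow_nonneg (avgB_nonneg hμpos _ _) _)
  nlinarith [mul_le_mul_of_nonneg_left h1 hσ]

lemma phi_superadd (hn : 1 ≤ n) (hμloc : LocallyIntegrable (mu ω))
    (hμpos : ∀ᵐ x ∂(volume : Measure (En n)), 0 < mu ω x)
    (z : En n) {A B : ℝ} (hA : 0 ≤ A) (hB : 0 ≤ B) :
    phi ω z A + phi ω z B ≤ phi ω z (A + B) := by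
  have gA : A * (avgB (mu ω) z A) ^ ((1 : ℝ) / n)
      ≤ (A + B) * (avgB (mu ω) z (A + B)) ^ ((1 : ℝ) / n) :=
    F_mono hn hμloc hμpos hA (by linarith) (ball_subset_ball (by linarith))
  have gB : B * (avgB (mu ω) z B) ^ ((1 : ℝ) / n)
      ≤ (A + B) * (avgB (mu ω) z (A + B)) ^ ((1 : ℝ) / n) :=
    F_mono hn hμloc hμpos hB (by linarith) (ball_subset_ball (by linarith))
  rw [phi_eq, phi_eq, phi_eq]
  nlinarith [mul_le_mul_of_nonneg_left gA hA, mul_le_mul_of_nonneg_left gB hB]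

section Psi

variable (hn : 1 ≤ n) (hμloc : LocallyIntegrable (mu ω))
  (hμpos : ∀ᵐ x ∂(volume : Measure (En n)), 0 < mu ω x)
  (hψ1 : ∀ (y : En n) (τ : ℝ), 0 ≤ τ → ψ y (phi ω y τ) = τ)
  (hψ2 : ∀ (y : En n) (u : ℝ), 0 ≤ u → 0 ≤ ψ y u ∧ phi ω y (ψ y u) = u)

include hψ1 in
lemma psi_zero (y : En n) : ψ y 0 = 0 := by
  have := hψ1 y 0 le_rfl; rwa [phi_zero] at this

include hn hμloc hμpos hψ2 in
lemma psi_le {y : En n} {u T : ℝ} (hu : 0 ≤ u) (hT : 0 ≤ T) (h : u ≤ phi ω y T) :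
    ψ y u ≤ T := by
  by_contra hc
  push_neg at hc
  obtain ⟨hψ0, hφ⟩ := hψ2 y u hu
  set τ := ψ y u with hτdef
  have hτ : 0 < τ := hT.trans_lt hc
  have havg : 0 < avgB (mu ω) y τ := avgB_pos hμloc hμpos y hτ
  have hG : 0 < τ * (avgB (mu ω) y τ) ^ ((1 : ℝ) / n) :=
    mul_pos hτ (Real.rpow_pos_of_pos havg _)
  have h2 : T * (avgB (mu ω) y T) ^ ((1 : ℝ) / n)
      ≤ τ * (avgB (mu ω) y τ) ^ ((1 : ℝ) / n) :=
    F_mono hn hμloc hμpos hT hτ.le (ball_subset_ball hc.le)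
  have h3 : phi ω y T < phi ω y τ := by
    calc phi ω y T = T * (T * (avgB (mu ω) y T) ^ ((1 : ℝ) / n)) := phi_eq y T
      _ ≤ T * (τ * (avgB (mu ω) y τ) ^ ((1 : ℝ) / n)) := mul_le_mul_of_nonneg_left h2 hT
      _ < τ * (τ * (avgB (mu ω) y τ) ^ ((1 : ℝ) / n)) := by
          exact mul_lt_mul_of_pos_right hc hG
      _ = phi ω y τ := (phi_eq y τ).symm
  rw [hφ] at h3
  linarith

end Psi

end S10

namespace S10

variable {n : ℕ} {ω : En n → ℝ} {ψ : En n → ℝ → ℝ}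

/-- the min-term in `rhoBar`. -/
def mTerm {n : ℕ} (ω : En n → ℝ) (ψ : En n → ℝ → ℝ) (X Y : En n × ℝ) : ℝ :=
  min (dist X.1 Y.1 ^ 2)
    ((avgB (mu ω) Y.1 (Theta ψ X Y)) ^ (-(1 : ℝ) / n) * (Y.2 - X.2))

lemma rhoBar_def (X Y : En n × ℝ) :
    rhoBar ω ψ X Y = Real.sqrt ((Theta ψ X Y) ^ 2 + mTerm ω ψ X Y) := rfl

lemma rpow_neg_div {a : ℝ} (ha : 0 ≤ a) :
    a ^ (-(1 : ℝ) / n) = (a ^ ((1 : ℝ) / n))⁻¹ := by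
  rw [neg_div, Real.rpow_neg ha]

lemma theta_nonneg (X Y : En n × ℝ) : 0 ≤ Theta ψ X Y :=
  le_max_of_le_left dist_nonneg

lemma dist_le_theta (X Y : En n × ℝ) : dist X.1 Y.1 ≤ Theta ψ X Y := le_max_left _ _

lemma psi_le_theta (X Y : En n × ℝ) : ψ Y.1 (Y.2 - X.2) ≤ Theta ψ X Y := le_max_right _ _

section RB

variable (hn : 1 ≤ n) (hμloc : LocallyIntegrable (mu ω))
  (hμpos : ∀ᵐ x ∂(volume : Measure (En n)), 0 < mu ω x)
  (hψ1 : ∀ (y : En n) (τ : ℝ), 0 ≤ τ → ψ y (phi ω y τ) = τ)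
  (hψ2 : ∀ (y : En n) (u : ℝ), 0 ≤ u → 0 ≤ ψ y u ∧ phi ω y (ψ y u) = u)

include hμpos in
lemma mTerm_nonneg {X Y : En n × ℝ} (h : X.2 ≤ Y.2) : 0 ≤ mTerm ω ψ X Y :=
  le_min (sq_nonneg _)
    (mul_nonneg (Real.rpow_nonneg (avgB_nonneg hμpos _ _) _) (by linarith))

include hμpos in
lemma rhoBar_sq {X Y : En n × ℝ} (h : X.2 ≤ Y.2) :
    rhoBar ω ψ X Y ^ 2 = (Theta ψ X Y) ^ 2 + mTerm ω ψ X Y := by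
  rw [rhoBar_def, Real.sq_sqrt]
  exact add_nonneg (sq_nonneg _) (mTerm_nonneg hμpos h)

lemma rhoBar_nonneg (X Y : En n × ℝ) : 0 ≤ rhoBar ω ψ X Y := Real.sqrt_nonneg _

include hμpos in
lemma theta_le_rhoBar {X Y : En n × ℝ} (h : X.2 ≤ Y.2) :
    Theta ψ X Y ≤ rhoBar ω ψ X Y := by
  rw [rhoBar_def]
  have h1 : Real.sqrt ((Theta ψ X Y) ^ 2) ≤ Real.sqrt ((Theta ψ X Y) ^ 2 + mTerm ω ψ X Y) :=
    Real.sqrt_le_sqrt (by linarith [mTerm_nonneg (ψ := ψ) hμpos h])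
  rwa [Real.sqrt_sq (theta_nonneg X Y)] at h1

include hn hμloc hμpos hψ2 in
lemma mTerm_le_theta_sq {X Y : En n × ℝ} (h : X.2 ≤ Y.2) :
    mTerm ω ψ X Y ≤ (Theta ψ X Y) ^ 2 := by
  set T := Theta ψ X Y with hT
  rcases eq_or_lt_of_le (theta_nonneg (ψ := ψ) X Y) with h0 | h0
  · have hd : dist X.1 Y.1 = 0 := le_antisymm (h0 ▸ dist_le_theta X Y) dist_nonneg
    calc mTerm ω ψ X Y ≤ dist X.1 Y.1 ^ 2 := min_le_left _ _
      _ = T ^ 2 := by rw [hd, hT, ← h0]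
  · have havg : 0 < avgB (mu ω) Y.1 T := avgB_pos hμloc hμpos _ h0
    have hα : 0 < (avgB (mu ω) Y.1 T) ^ ((1 : ℝ) / n) := Real.rpow_pos_of_pos havg _
    have hu : 0 ≤ Y.2 - X.2 := by linarith
    obtain ⟨hψ0, hφ⟩ := hψ2 Y.1 (Y.2 - X.2) hu
    have hle : Y.2 - X.2 ≤ phi ω Y.1 T := by
      calc Y.2 - X.2 = phi ω Y.1 (ψ Y.1 (Y.2 - X.2)) := hφ.symm
        _ ≤ phi ω Y.1 T := phi_le hn hμloc hμpos hψ0 h0.le (psi_le_theta X Y)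
            (ball_subset_ball (psi_le_theta X Y))
    calc mTerm ω ψ X Y ≤ (avgB (mu ω) Y.1 T) ^ (-(1 : ℝ) / n) * (Y.2 - X.2) :=
          min_le_right _ _
      _ ≤ (avgB (mu ω) Y.1 T) ^ (-(1 : ℝ) / n) * phi ω Y.1 T := by
          apply mul_le_mul_of_nonneg_left hle
          exact Real.rpow_nonneg havg.le _
      _ = T ^ 2 := by
          rw [rpow_neg_div havg.le, phi]
          field_simp

include hn hμloc hμpos hψ2 in
lemma easy_bound {X Y : En n × ℝ} (h : X.2 ≤ Y.2) {R : ℝ} (hR : 0 ≤ R)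
    (hT : Theta ψ X Y ≤ R) : rhoBar ω ψ X Y ≤ 2 * R := by
  rw [rhoBar_def]
  have h1 := mTerm_le_theta_sq hn hμloc hμpos hψ2 (X := X) (Y := Y) h
  have h2 : (Theta ψ X Y) ^ 2 + mTerm ω ψ X Y ≤ (2 * R) ^ 2 := by
    nlinarith [theta_nonneg (ψ := ψ) X Y]
  calc Real.sqrt ((Theta ψ X Y) ^ 2 + mTerm ω ψ X Y) ≤ Real.sqrt ((2 * R) ^ 2) :=
        Real.sqrt_le_sqrt h2
    _ = 2 * R := Real.sqrt_sq (by linarith)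

end RB

end S10

namespace S10

variable {n : ℕ} {ω : En n → ℝ} {ψ : En n → ℝ → ℝ}

section Rho

variable (hψ1 : ∀ (y : En n) (τ : ℝ), 0 ≤ τ → ψ y (phi ω y τ) = τ)

include hψ1 in
lemma rhoBar_time_eq {X Y : En n × ℝ} (h : X.2 = Y.2) :
    rhoBar ω ψ X Y = rhoBar ω ψ Y X := by
  have h1 : Y.2 - X.2 = 0 := by rw [h, sub_self]
  have h2 : X.2 - Y.2 = 0 := by rw [h, sub_self]
  unfold rhoBar Theta
  rw [h1, h2, psi_zero hψ1, psi_zero hψ1, dist_comm X.1 Y.1,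
    max_eq_left dist_nonneg, mul_zero, mul_zero,
    min_eq_right (sq_nonneg _)]

include hψ1 in
lemma rhoBar_self (X : En n × ℝ) : rhoBar ω ψ X X = 0 := by
  unfold rhoBar Theta
  rw [sub_self, psi_zero hψ1, dist_self, max_self, mul_zero,
    min_eq_right (le_of_eq (by norm_num))]
  norm_num

include hψ1 in
lemma rho_eq {X Y : En n × ℝ} (h : X.2 ≤ Y.2) : rho ω ψ X Y = rhoBar ω ψ X Y := by
  unfold rho
  split_ifs with h1
  · rw [h1, rhoBar_self hψ1]
  · rfl

include hψ1 in
lemma rho_eq' {X Y : En n × ℝ} (h : Y.2 ≤ X.2) : rho ω ψ X Y = rhoBar ω ψ Y X := by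
  unfold rho
  split_ifs with h1 h2
  · rw [h1, rhoBar_self hψ1]
  · exact rhoBar_time_eq hψ1 (le_antisymm h2 h)
  · rfl

include hψ1 in
lemma rho_symm (X Y : En n × ℝ) : rho ω ψ X Y = rho ω ψ Y X := by
  rcases le_total X.2 Y.2 with h | h
  · rw [rho_eq hψ1 h, rho_eq' hψ1 h]
  · rw [rho_eq' hψ1 h, rho_eq hψ1 h]

end Rho

end S10

namespace S10

variable {n : ℕ} {ω : En n → ℝ} {ψ : En n → ℝ → ℝ}

section Cases

variable (hn : 1 ≤ n) (hμloc : LocallyIntegrable (mu ω))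
  (hμpos : ∀ᵐ x ∂(volume : Measure (En n)), 0 < mu ω x)
  (hψ1 : ∀ (y : En n) (τ : ℝ), 0 ≤ τ → ψ y (phi ω y τ) = τ)
  (hψ2 : ∀ (y : En n) (u : ℝ), 0 ≤ u → 0 ≤ ψ y u ∧ phi ω y (ψ y u) = u)

include hn hμloc hμpos hψ2 in
lemma caseB {X Y Z : En n × ℝ} (hyx : Y.2 ≤ X.2) (hxz : X.2 ≤ Z.2) :
    rhoBar ω ψ X Z ≤ 2 * (rhoBar ω ψ Y X + rhoBar ω ψ Y Z) := by
  have hyz : Y.2 ≤ Z.2 := hyx.trans hxz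
  have hp0 : 0 ≤ rhoBar ω ψ Y X := rhoBar_nonneg Y X
  have hq0 : 0 ≤ rhoBar ω ψ Y Z := rhoBar_nonneg Y Z
  apply easy_bound hn hμloc hμpos hψ2 hxz (by linarith)
  apply max_le
  · calc dist X.1 Z.1 ≤ dist X.1 Y.1 + dist Y.1 Z.1 := dist_triangle _ _ _
      _ = dist Y.1 X.1 + dist Y.1 Z.1 := by rw [dist_comm]
      _ ≤ rhoBar ω ψ Y X + rhoBar ω ψ Y Z := add_le_add
          (le_trans (dist_le_theta Y X) (theta_le_rhoBar hμpos hyx))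
          (le_trans (dist_le_theta Y Z) (theta_le_rhoBar hμpos hyz))
  · have hb0 : 0 ≤ ψ Z.1 (Z.2 - Y.2) := (hψ2 Z.1 (Z.2 - Y.2) (by linarith)).1
    have h1 : ψ Z.1 (Z.2 - X.2) ≤ ψ Z.1 (Z.2 - Y.2) := by
      apply psi_le hn hμloc hμpos hψ2 (by linarith) hb0
      rw [(hψ2 Z.1 (Z.2 - Y.2) (by linarith)).2]
      linarith
    calc ψ Z.1 (Z.2 - X.2) ≤ ψ Z.1 (Z.2 - Y.2) := h1
      _ ≤ rhoBar ω ψ Y Z := le_trans (psi_le_theta Y Z) (theta_le_rhoBar hμpos hyz)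
      _ ≤ rhoBar ω ψ Y X + rhoBar ω ψ Y Z := by linarith

include hn hμloc hμpos hψ2 in
lemma caseC {X Y Z : En n × ℝ} (hxy : X.2 ≤ Y.2) (hzy : Z.2 ≤ Y.2) (hxz : X.2 ≤ Z.2) :
    rhoBar ω ψ X Z ≤ 2 * (rhoBar ω ψ X Y + rhoBar ω ψ Z Y) := by
  set p := rhoBar ω ψ X Y with hpdef
  set q := rhoBar ω ψ Z Y with hqdef
  have hp0 : 0 ≤ p := rhoBar_nonneg X Y
  have hq0 : 0 ≤ q := rhoBar_nonneg Z Y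
  have ha0 : 0 ≤ ψ Y.1 (Y.2 - X.2) := (hψ2 Y.1 (Y.2 - X.2) (by linarith)).1
  have hap : ψ Y.1 (Y.2 - X.2) ≤ p := le_trans (psi_le_theta X Y) (theta_le_rhoBar hμpos hxy)
  have hdq : dist Z.1 Y.1 ≤ q := le_trans (dist_le_theta Z Y) (theta_le_rhoBar hμpos hzy)
  have hep : dist X.1 Y.1 ≤ p := le_trans (dist_le_theta X Y) (theta_le_rhoBar hμpos hxy)
  apply easy_bound hn hμloc hμpos hψ2 hxz (by linarith)
  apply max_le
  · calc dist X.1 Z.1 ≤ dist X.1 Y.1 + dist Y.1 Z.1 := dist_triangle _ _ _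
      _ = dist X.1 Y.1 + dist Z.1 Y.1 := by rw [dist_comm Y.1 Z.1]
      _ ≤ p + q := add_le_add hep hdq
  · apply psi_le hn hμloc hμpos hψ2 (by linarith) (by linarith)
    calc Z.2 - X.2 ≤ Y.2 - X.2 := by linarith
      _ = phi ω Y.1 (ψ Y.1 (Y.2 - X.2)) := ((hψ2 Y.1 (Y.2 - X.2) (by linarith)).2).symm
      _ ≤ phi ω Z.1 (p + q) := by
          apply phi_le hn hμloc hμpos ha0 (by linarith) (by linarith)
          apply ball_subset_ball'
          calc ψ Y.1 (Y.2 - X.2) + dist Y.1 Z.1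
              = ψ Y.1 (Y.2 - X.2) + dist Z.1 Y.1 := by rw [dist_comm]
            _ ≤ p + q := add_le_add hap hdq

end Cases

end S10

namespace S10

variable {n : ℕ} {ω : En n → ℝ} {ψ : En n → ℝ → ℝ}

section CaseA

lemma algA {p q b d T D m : ℝ} (hp0 : 0 ≤ p) (hq0 : 0 ≤ q) (hb0 : 0 ≤ b) (hd0 : 0 ≤ d)
    (hT0 : 0 ≤ T) (hD0 : 0 ≤ D) (hT : T ≤ p + (b + d)) (hD : D ≤ p + q)
    (hbdq : b ^ 2 + d ^ 2 ≤ q ^ 2) (hm : m ≤ D ^ 2) :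
    T ^ 2 + m ≤ (2 * (p + q)) ^ 2 := by
  have hbq : b ≤ q := by nlinarith
  have hdq : d ≤ q := by nlinarith
  have h1 : T ^ 2 ≤ (p + (b + d)) ^ 2 := pow_le_pow_left₀ hT0 hT 2
  have h2 : D ^ 2 ≤ (p + q) ^ 2 := pow_le_pow_left₀ hD0 hD 2
  nlinarith [sq_nonneg (b - d), mul_le_mul_of_nonneg_left (show b + d ≤ 2 * q by linarith) hp0,
    mul_nonneg hp0 hq0]

lemma algB {p q d T m : ℝ} (hp0 : 0 ≤ p) (hq0 : 0 ≤ q) (hd0 : 0 < d) (hdq : d ≤ q)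
    (hq2d : q < 2 * d) (hT0 : 0 ≤ T) (hTp2d : T ≤ p + 2 * d)
    (hfin : d * (T ^ 2 + m) ≤ d * T ^ 2 + d * (p * T) + T * (q ^ 2 - d ^ 2)) :
    d * (T ^ 2 + m) ≤ d * ((2 * (p + q)) ^ 2) := by
  have hq2d2 : (0:ℝ) ≤ q ^ 2 - d ^ 2 := by nlinarith
  have hA1 : T ^ 2 ≤ (p + 2 * d) ^ 2 := pow_le_pow_left₀ hT0 hTp2d 2
  have hA2 : T * (q ^ 2 - d ^ 2) ≤ (p + 2 * d) * (q ^ 2 - d ^ 2) :=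
    mul_le_mul_of_nonneg_right hTp2d hq2d2
  have hA3 : d * (p * T) ≤ d * (p * (p + 2 * d)) :=
    mul_le_mul_of_nonneg_left (mul_le_mul_of_nonneg_left hTp2d hp0) hd0.le
  nlinarith [hfin, hA1, hA2, hA3,
    mul_nonneg (mul_nonneg hp0 (by linarith : (0:ℝ) ≤ 2 * d - q))
      (by linarith : (0:ℝ) ≤ q - d),
    mul_nonneg (mul_nonneg hp0 hq0) hd0.le,
    mul_nonneg hp0 hq2d2,
    mul_nonneg hd0.le hq2d2,
    mul_nonneg hd0.le (mul_nonneg hp0 hp0)]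


variable (hn : 1 ≤ n) (hμloc : LocallyIntegrable (mu ω))
  (hμpos : ∀ᵐ x ∂(volume : Measure (En n)), 0 < mu ω x)
  (hψ2 : ∀ (y : En n) (u : ℝ), 0 ≤ u → 0 ≤ ψ y u ∧ phi ω y (ψ y u) = u)

include hn hμloc hμpos hψ2 in
lemma caseA {X Y Z : En n × ℝ} (hxy : X.2 ≤ Y.2) (hyz : Y.2 ≤ Z.2) :
    rhoBar ω ψ X Z ≤ 2 * (rhoBar ω ψ X Y + rhoBar ω ψ Y Z) := by
  have hxz : X.2 ≤ Z.2 := hxy.trans hyz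
  set p := rhoBar ω ψ X Y with hpdef
  set q := rhoBar ω ψ Y Z with hqdef
  have hp0 : 0 ≤ p := rhoBar_nonneg X Y
  have hq0 : 0 ≤ q := rhoBar_nonneg Y Z
  set T := Theta ψ X Z with hTdef
  have hT0 : 0 ≤ T := theta_nonneg X Z
  by_cases hTS : T ≤ p + q
  · exact easy_bound hn hμloc hμpos hψ2 hxz (by linarith) hTS
  push_neg at hTS
  -- notation
  set u := Y.2 - X.2 with hudef
  set v := Z.2 - Y.2 with hvdef
  set w := Z.2 - X.2 with hwdef
  have hu0 : 0 ≤ u := by rw [hudef]; linarith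
  have hv0 : 0 ≤ v := by rw [hvdef]; linarith
  have hw0 : 0 ≤ w := by rw [hwdef]; linarith
  have hwuv : w = u + v := by rw [hudef, hvdef, hwdef]; ring
  set a := ψ Y.1 u with hadef
  set b := ψ Z.1 v with hbdef
  set e := dist X.1 Y.1 with hedef
  set d := dist Y.1 Z.1 with hddef
  have ha0 : 0 ≤ a := (hψ2 Y.1 u hu0).1
  have hb0 : 0 ≤ b := (hψ2 Z.1 v hv0).1
  have he0 : 0 ≤ e := dist_nonneg
  have hd0 : 0 ≤ d := dist_nonneg
  have hphia : phi ω Y.1 a = u := (hψ2 Y.1 u hu0).2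
  have hphib : phi ω Z.1 b = v := (hψ2 Z.1 v hv0).2
  have hap : a ≤ p := le_trans (psi_le_theta X Y) (theta_le_rhoBar hμpos hxy)
  have hep : e ≤ p := le_trans (dist_le_theta X Y) (theta_le_rhoBar hμpos hxy)
  have hbq : b ≤ q := le_trans (psi_le_theta Y Z) (theta_le_rhoBar hμpos hyz)
  have hdq : d ≤ q := le_trans (dist_le_theta Y Z) (theta_le_rhoBar hμpos hyz)
  have hDed : dist X.1 Z.1 ≤ e + d := by
    rw [hedef, hddef]; exact dist_triangle _ _ _
  have hDpq : dist X.1 Z.1 ≤ p + q := by linarith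
  have hD0 : 0 ≤ dist X.1 Z.1 := dist_nonneg
  -- u ≤ phi_z (a + d)
  have hu_ad : u ≤ phi ω Z.1 (a + d) := by
    rw [← hphia]
    exact phi_le hn hμloc hμpos ha0 (by linarith) (by linarith)
      (ball_subset_ball' le_rfl)
  -- T ≤ a + b + d
  have hTabd : T ≤ a + d + b := by
    have hTpsi : T ≤ ψ Z.1 w := by
      rcases max_cases (dist X.1 Z.1) (ψ Z.1 w) with ⟨h1, h2⟩ | ⟨h1, h2⟩
      · exfalso
        have : T = dist X.1 Z.1 := h1
        linarith
      · exact le_of_eq h1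
    refine le_trans hTpsi (psi_le hn hμloc hμpos hψ2 hw0 (by linarith) ?_)
    calc w = u + v := hwuv
      _ ≤ phi ω Z.1 (a + d) + phi ω Z.1 b := add_le_add hu_ad (le_of_eq hphib.symm)
      _ ≤ phi ω Z.1 (a + d + b) := phi_superadd hn hμloc hμpos Z.1 (by linarith) hb0
  -- goal reduction
  set m := mTerm ω ψ X Z with hmdef
  have hmD : m ≤ dist X.1 Z.1 ^ 2 := min_le_left _ _
  suffices key : T ^ 2 + m ≤ (2 * (p + q)) ^ 2 by
    rw [rhoBar_def]
    calc Real.sqrt ((Theta ψ X Z) ^ 2 + mTerm ω ψ X Z) ≤ Real.sqrt ((2 * (p + q)) ^ 2) :=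
          Real.sqrt_le_sqrt key
      _ = 2 * (p + q) := Real.sqrt_sq (by linarith)
  by_cases hα : b ^ 2 + d ^ 2 ≤ q ^ 2
  · -- subcase α
    exact algA hp0 hq0 hb0 hd0 hT0 hD0 (by linarith) hDpq hα hmD
  · -- subcase β
    push_neg at hα
    have hq2 : q ^ 2 = (Theta ψ Y Z) ^ 2 + mTerm ω ψ Y Z := rhoBar_sq (ψ := ψ) hμpos hyz
    have hbd : b < d := by
      by_contra hc
      push_neg at hc  -- d ≤ b
      have hbpos : 0 < b := by
        rcases eq_or_lt_of_le hb0 with h | h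
        · exfalso
          have hb' : b = 0 := h.symm
          have hd' : d = 0 := le_antisymm (hb' ▸ hc) hd0
          rw [hb', hd'] at hα
          norm_num at hα
          exact absurd hα (not_lt.mpr (sq_nonneg q))
        · exact h
      have havgb : 0 < avgB (mu ω) Z.1 b := avgB_pos hμloc hμpos _ hbpos
      have hΘ2 : Theta ψ Y Z = b := max_eq_right hc
      have hb2 : (avgB (mu ω) Z.1 b) ^ (-(1 : ℝ) / n) * v = b ^ 2 := by
        rw [← hphib, phi, rpow_neg_div havgb.le]
        field_simp
      have hmYZ : mTerm ω ψ Y Z = d ^ 2 := by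
        rw [mTerm, hΘ2, hb2]
        exact min_eq_left (pow_le_pow_left₀ hd0 hc 2)
      rw [hΘ2, hmYZ] at hq2
      linarith
    have hdpos : 0 < d := lt_of_le_of_lt hb0 hbd
    have hΘ2 : Theta ψ Y Z = d := max_eq_left hbd.le
    have havgd : 0 < avgB (mu ω) Z.1 d := avgB_pos hμloc hμpos _ hdpos
    set m2 := (avgB (mu ω) Z.1 d) ^ (-(1 : ℝ) / n) * v with hm2def
    have hm20 : 0 ≤ m2 :=
      mul_nonneg (Real.rpow_nonneg havgd.le _) hv0
    have hqdm : q ^ 2 = d ^ 2 + m2 := by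
      rw [hΘ2] at hq2
      have hmin : mTerm ω ψ Y Z = min (d ^ 2) m2 := by rw [mTerm, hΘ2]
      rcases min_cases (d ^ 2) m2 with ⟨h1, h2⟩ | ⟨h1, h2⟩
      · rw [hmin, h1] at hq2
        have := pow_lt_pow_left₀ hbd hb0 (two_ne_zero)
        linarith
      · rw [hmin, h1] at hq2; exact hq2
    have hdq2 : d ≤ q := by
      have h2 : d ^ 2 ≤ q ^ 2 := by linarith
      exact (pow_le_pow_iff_left₀ hdpos.le hq0 two_ne_zero).mp h2
    have hq2d : q < 2 * d := by linarith
    have hTpos : 0 < T := lt_of_le_of_lt (by linarith : (0:ℝ) ≤ p + q) hTS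
    have havgT : 0 < avgB (mu ω) Z.1 T := avgB_pos hμloc hμpos _ hTpos
    set alp := (avgB (mu ω) Z.1 T) ^ ((1 : ℝ) / n) with halpdef
    set bet := (avgB (mu ω) Z.1 d) ^ ((1 : ℝ) / n) with hbetdef
    have halp : 0 < alp := Real.rpow_pos_of_pos havgT _
    have hbet : 0 < bet := Real.rpow_pos_of_pos havgd _
    -- term 1
    have hu_le : u ≤ a * (T * alp) := by
      have hGya : a * (avgB (mu ω) Y.1 a) ^ ((1 : ℝ) / n)
          ≤ (a + d) * (avgB (mu ω) Z.1 (a + d)) ^ ((1 : ℝ) / n) :=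
        F_mono hn hμloc hμpos ha0 (by linarith) (ball_subset_ball' (by rw [hddef]))
      have h2 : (a + d) * (avgB (mu ω) Z.1 (a + d)) ^ ((1 : ℝ) / n) ≤ T * alp :=
        F_mono hn hμloc hμpos (by linarith) hT0 (ball_subset_ball (by linarith))
      calc u = a * (a * (avgB (mu ω) Y.1 a) ^ ((1 : ℝ) / n)) := by rw [← hphia, phi_eq]
        _ ≤ a * (T * alp) := mul_le_mul_of_nonneg_left (hGya.trans h2) ha0
    have hT1 : alp⁻¹ * u ≤ p * T := by
      have h1 := mul_le_mul_of_nonneg_left hu_le (inv_nonneg.mpr halp.le)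
      have e1 : alp⁻¹ * (a * (T * alp)) = a * T := by field_simp
      calc alp⁻¹ * u ≤ alp⁻¹ * (a * (T * alp)) := h1
        _ = a * T := e1
        _ ≤ p * T := mul_le_mul_of_nonneg_right hap hT0
    have hdT : d * bet ≤ T * alp :=
      F_mono hn hμloc hμpos hdpos.le hT0 (ball_subset_ball (by linarith))
    have hT2 : d * (alp⁻¹ * v) ≤ T * m2 := by
      have hm2' : m2 = bet⁻¹ * v := by rw [hm2def, rpow_neg_div havgd.le, hbetdef]
      have h1 := mul_le_mul_of_nonneg_right hdT
        (show 0 ≤ alp⁻¹ * bet⁻¹ * v by positivity)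
      rw [hm2']
      calc d * (alp⁻¹ * v) = d * bet * (alp⁻¹ * bet⁻¹ * v) := by field_simp
        _ ≤ T * alp * (alp⁻¹ * bet⁻¹ * v) := h1
        _ = T * (bet⁻¹ * v) := by field_simp
    have hmA : m ≤ alp⁻¹ * u + alp⁻¹ * v := by
      have h1 : m ≤ (avgB (mu ω) Z.1 (Theta ψ X Z)) ^ (-(1 : ℝ) / n) * (Z.2 - X.2) :=
        min_le_right _ _
      have h2 : (avgB (mu ω) Z.1 (Theta ψ X Z)) ^ (-(1 : ℝ) / n) * (Z.2 - X.2)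
          = alp⁻¹ * u + alp⁻¹ * v := by
        rw [← hTdef, rpow_neg_div havgT.le, ← halpdef, ← hwdef, hwuv]; ring
      rw [h2] at h1; exact h1
    -- assemble
    have hm2val : m2 = q ^ 2 - d ^ 2 := by linarith
    have hTp2d : T ≤ p + 2 * d := by linarith
    have hfin : d * (T ^ 2 + m) ≤ d * T ^ 2 + d * (p * T) + T * (q ^ 2 - d ^ 2) := by
      have h1 : d * m ≤ d * (alp⁻¹ * u) + d * (alp⁻¹ * v) := by
        have h0 := mul_le_mul_of_nonneg_left hmA hd0
        have e0 : d * (alp⁻¹ * u + alp⁻¹ * v) = d * (alp⁻¹ * u) + d * (alp⁻¹ * v) := by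
          ring
        linarith [e0 ▸ h0]
      have h2 : d * (alp⁻¹ * u) ≤ d * (p * T) :=
        mul_le_mul_of_nonneg_left hT1 hd0
      have h3 : d * (alp⁻¹ * v) ≤ T * m2 := hT2
      rw [hm2val] at h3
      have e1 : d * (T ^ 2 + m) = d * T ^ 2 + d * m := by ring
      linarith [e1]
    have hd4 : d * (T ^ 2 + m) ≤ d * ((2 * (p + q)) ^ 2) :=
      algB hp0 hq0 hdpos hdq2 hq2d hT0 hTp2d hfin
    exact le_of_mul_le_mul_left hd4 hdpos

end CaseA

end S10


/-- the quasi-triangle inequality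
$ρ_ω(X,Z) ≤ 2[ρ_ω(X,Y) + ρ_ω(Y,Z)]$. -/
theorem stmt10 {n : ℕ} (hn : 1 ≤ n) (ω : En n → ℝ)
    (hμloc : LocallyIntegrable (mu ω))
    (hμpos : ∀ᵐ x ∂(volume : Measure (En n)), 0 < mu ω x)
    (ψ : En n → ℝ → ℝ)
    (hψ1 : ∀ (y : En n) (τ : ℝ), 0 ≤ τ → ψ y (phi ω y τ) = τ)
    (hψ2 : ∀ (y : En n) (u : ℝ), 0 ≤ u → 0 ≤ ψ y u ∧ phi ω y (ψ y u) = u) :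
    ∀ X Y Z : En n × ℝ, rho ω ψ X Z ≤ 2 * (rho ω ψ X Y + rho ω ψ Y Z) := by
  have main : ∀ X Y Z : En n × ℝ, X.2 ≤ Z.2 →
      rho ω ψ X Z ≤ 2 * (rho ω ψ X Y + rho ω ψ Y Z) := by
    intro X Y Z hxz
    rw [S10.rho_eq hψ1 hxz]
    rcases le_total X.2 Y.2 with h1 | h1
    · rcases le_total Y.2 Z.2 with h2 | h2
      · rw [S10.rho_eq hψ1 h1, S10.rho_eq hψ1 h2]
        exact S10.caseA hn hμloc hμpos hψ2 h1 h2
      · rw [S10.rho_eq hψ1 h1, S10.rho_eq' hψ1 h2]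
        exact S10.caseC hn hμloc hμpos hψ2 h1 h2 hxz
    · rw [S10.rho_eq' hψ1 h1, S10.rho_eq hψ1 (h1.trans hxz)]
      exact S10.caseB hn hμloc hμpos hψ2 h1 hxz
  intro X Y Z
  rcases le_total X.2 Z.2 with h | h
  · exact main X Y Z h
  · calc rho ω ψ X Z = rho ω ψ Z X := S10.rho_symm hψ1 X Z
      _ ≤ 2 * (rho ω ψ Z Y + rho ω ψ Y X) := main Z Y X h
      _ = 2 * (rho ω ψ X Y + rho ω ψ Y Z) := by
          rw [S10.rho_symm hψ1 Z Y, S10.rho_symm hψ1 Y X]; ring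
end
end

section
/- (Radius growth in the inclusion lemma.) Let ω ∈ A_{1+1/n} with [ω]_{A_{1+1/n}} ≤ K₀ and μ = ω^{-n}. Fix r > 0, y ∈ ℝⁿ, and κ₀ > 0. Suppose r̃ > r satisfies μ(B_r(y))/μ(B_{r̃}(y)) = (2+κ₀)/(2+2κ₀). Then there exists η₀ = η₀(n,K₀,κ₀) > 0, independent of r, y, such that r̃ ≥ (1+η₀) r. Explicitly, one may take η₀ = [1 − (κ₀/(N(2+2κ₀)))^{1/λ₀}]^{-1/n} − 1, where N, λ₀ are the constants from the annulus comparison property of the A_{n+1} weight μ. -/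
open MeasureTheory Metric Set Filter

noncomputable section

/-- radius growth in the inclusion lemma: if
$μ(B_r(y))/μ(B_{r̃}(y)) = (2+κ₀)/(2+2κ₀)$ and $μ$ satisfies the annulus comparison
property with constants $N, lam$, then $r̃ ≥ (1+η₀) r$ with the explicit
$η₀ = [1 - (κ₀/(N(2+2κ₀)))^{1/lam}]^{-1/n} - 1$. -/
theorem stmt14 {n : ℕ} (hn : 1 ≤ n) (μ : En n → ℝ) (hμ : ∀ x, 0 ≤ μ x)
    (hμloc : LocallyIntegrable μ)
    (N lam : ℝ) (hN : 0 < N) (hlam : 0 < lam)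
    (hann : ∀ (x₀ : En n) (R : ℝ), 0 < R → ∀ S : Set (En n), S ⊆ ball x₀ R →
      MeasurableSet S →
      (∫ x in S, μ x) ≤
        N * ((volume S).toReal / (volume (ball x₀ R)).toReal) ^ lam *
          ∫ x in ball x₀ R, μ x)
    (y : En n) (r rt κ₀ : ℝ) (hκ : 0 < κ₀) (hr : 0 < r) (hrr : r < rt)
    (hratio : (∫ x in ball y r, μ x) / (∫ x in ball y rt, μ x)
      = (2 + κ₀) / (2 + 2 * κ₀)) :
    (1 + ((1 - (κ₀ / (N * (2 + 2 * κ₀))) ^ (1 / lam)) ^ (-(1 : ℝ) / n) - 1)) * r ≤ rt := by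
  have hrt : 0 < rt := hr.trans hrr
  set A := ∫ x in ball y r, μ x with hA
  set B := ∫ x in ball y rt, μ x with hB
  -- integrability on the big ball
  have hint : IntegrableOn μ (ball y rt) volume :=
    (hμloc.integrableOn_isCompact (isCompact_closedBall y rt)).mono_set
      ball_subset_closedBall
  have hsub : ball y r ⊆ ball y rt := ball_subset_ball hrr.le
  -- B > 0
  have hden : (0:ℝ) < 2 + 2 * κ₀ := by linarith
  have hnum : (0:ℝ) < 2 + κ₀ := by linarith
  have hBne : B ≠ 0 := by
    intro h
    rw [h, div_zero] at hratio
    have : (0:ℝ) < (2 + κ₀) / (2 + 2 * κ₀) := div_pos hnum hden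
    linarith
  have hBnn : 0 ≤ B := setIntegral_nonneg measurableSet_ball fun x _ => hμ x
  have hBpos : 0 < B := lt_of_le_of_ne hBnn (Ne.symm hBne)
  have hAeq : A = B * ((2 + κ₀) / (2 + 2 * κ₀)) := by
    have h2 := (div_eq_div_iff hBpos.ne' hden.ne').mp hratio
    field_simp
    linear_combination h2
  -- annulus integral
  have hdiff : (∫ x in ball y rt \ ball y r, μ x) = B - A := by
    rw [integral_diff measurableSet_ball hint hsub]
  have hannS := hann y rt hrt (ball y rt \ ball y r) diff_subset
    (measurableSet_ball.diff measurableSet_ball)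
  rw [hdiff] at hannS
  -- compute the volume ratio
  have hvinst : ∀ (ρ : ℝ), 0 < ρ →
      volume (ball y ρ) = ENNReal.ofReal (ρ ^ n) * volume (ball (0 : En n) 1) := by
    intro ρ hρ
    rw [Measure.addHaar_ball_of_pos volume y hρ, finrank_euclideanSpace_fin]
  have hvol1pos : 0 < volume (ball (0 : En n) 1) := measure_ball_pos _ _ one_pos
  have hvol1top : volume (ball (0 : En n) 1) < ⊤ := measure_ball_lt_top
  have hvr := hvinst r hr
  have hvrt := hvinst rt hrt
  have hvrt_top : volume (ball y rt) < ⊤ := measure_ball_lt_top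
  have hvS : (volume (ball y rt \ ball y r)).toReal
      = (volume (ball y rt)).toReal - (volume (ball y r)).toReal := by
    rw [measure_diff hsub measurableSet_ball.nullMeasurableSet
      (measure_ball_lt_top.ne),
      ENNReal.toReal_sub_of_le (measure_mono hsub) hvrt_top.ne]
  set W := (volume (ball (0 : En n) 1)).toReal with hW
  have hWpos : 0 < W := ENNReal.toReal_pos hvol1pos.ne' hvol1top.ne
  have htr : (volume (ball y r)).toReal = r ^ n * W := by
    rw [hvr, ENNReal.toReal_mul, ENNReal.toReal_ofReal (by positivity)]
  have htrt : (volume (ball y rt)).toReal = rt ^ n * W := by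
    rw [hvrt, ENNReal.toReal_mul, ENNReal.toReal_ofReal (by positivity)]
  have hratio_vol : (volume (ball y rt \ ball y r)).toReal
      / (volume (ball y rt)).toReal = 1 - (r / rt) ^ n := by
    rw [hvS, htr, htrt, div_pow]
    have hrtn : (0:ℝ) < rt ^ n := by positivity
    field_simp
  rw [hratio_vol] at hannS
  -- B - A = κ₀/(2+2κ₀) * B
  have hBA : B - A = κ₀ / (2 + 2 * κ₀) * B := by
    rw [hAeq]; field_simp; ring
  rw [hBA] at hannS
  -- divide by B
  have key : κ₀ / (2 + 2 * κ₀) ≤ N * (1 - (r / rt) ^ n) ^ lam := by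
    have := (mul_le_mul_iff_of_pos_right hBpos).mp hannS
    linarith
  -- v := 1 - (r/rt)^n ∈ [0, 1), and (κ₀/(N(2+2κ₀)))^(1/lam) ≤ v
  set x := r / rt with hx
  have hx0 : 0 < x := div_pos hr hrt
  have hx1 : x < 1 := (div_lt_one hrt).mpr hrr
  have hxn0 : 0 < x ^ n := by positivity
  have hxn1 : x ^ n < 1 := pow_lt_one₀ hx0.le hx1 (by omega)
  have hv0 : 0 ≤ 1 - x ^ n := by linarith
  set t := (κ₀ / (N * (2 + 2 * κ₀))) ^ (1 / lam) with ht
  have htle : t ≤ 1 - x ^ n := by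
    have h1 : κ₀ / (N * (2 + 2 * κ₀)) ≤ (1 - x ^ n) ^ lam := by
      rw [div_le_iff₀ (by positivity)]
      calc κ₀ = κ₀ / (2 + 2 * κ₀) * (2 + 2 * κ₀) := by field_simp
        _ ≤ N * (1 - x ^ n) ^ lam * (2 + 2 * κ₀) := by
            apply mul_le_mul_of_nonneg_right key hden.le
        _ = (1 - x ^ n) ^ lam * (N * (2 + 2 * κ₀)) := by ring
    calc t ≤ ((1 - x ^ n) ^ lam) ^ (1 / lam) := by
            apply Real.rpow_le_rpow (by positivity) h1 (by positivity)
      _ = 1 - x ^ n := by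
            rw [← Real.rpow_mul hv0, mul_one_div, div_self hlam.ne', Real.rpow_one]
  have htpos : 0 < t := by
    apply Real.rpow_pos_of_pos
    positivity
  set c := 1 - t with hc
  have hc0 : 0 < c := by
    have : x ^ n ≤ 1 - t := by linarith
    linarith [hxn0]
  have hxc : x ^ n ≤ c := by rw [hc]; linarith
  -- x ≤ c^(1/n)
  have hnR : (0:ℝ) < (n : ℝ) := by exact_mod_cast Nat.pos_of_ne_zero (by omega)
  have hxle : x ≤ c ^ ((1:ℝ) / n) := by
    have h1 : x ^ (n:ℝ) ≤ c := by rwa [Real.rpow_natCast]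
    calc x = (x ^ (n:ℝ)) ^ ((1:ℝ)/n) := by
            rw [← Real.rpow_mul hx0.le, mul_one_div, div_self hnR.ne', Real.rpow_one]
      _ ≤ c ^ ((1:ℝ)/n) := Real.rpow_le_rpow (by positivity) h1 (by positivity)
  have hcpow : 0 < c ^ ((1:ℝ) / n) := Real.rpow_pos_of_pos hc0 _
  -- conclude
  have hgoal : c ^ (-(1:ℝ) / n) * r ≤ rt := by
    rw [neg_div, Real.rpow_neg hc0.le, ← div_eq_inv_mul, div_le_iff₀ hcpow]
    calc r = x * rt := by rw [hx]; field_simp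
      _ ≤ c ^ ((1:ℝ)/n) * rt := mul_le_mul_of_nonneg_right hxle hrt.le
      _ = rt * c ^ ((1:ℝ)/n) := by ring
  calc (1 + (c ^ (-(1:ℝ) / n) - 1)) * r = c ^ (-(1:ℝ) / n) * r := by ring
    _ ≤ rt := hgoal
end
end
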